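/- Let h: [0,∞) → [0,∞) be of class C² with h(0) = h'(0) = 0 and suppose there are constants c₁, c₂ > 0 and an exponent μ ∈ (1,∞) such that c₁(1+t)^{−μ} ≤ h''(t) and h'(t) ≤ c₂·t/(1+t) for all t ≥ 0. Then for all t ≥ 0: c₁·2^{−μ}·(t − 1) ≤ h(t) ≤ c₂·t. -/

import Mathlib

noncomputable section

open MeasureTheory Real Filter

/-- Partial derivative ∂ₖu(x) ∈ ℝⁿ of a vector field u : ℝⁿ → ℝⁿ. -/
def pd {n : ℕ} (u : EuclideanSpace ℝ (Fin n) → EuclideanSpace ℝ (Fin n))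
    (k : Fin n) (x : EuclideanSpace ℝ (Fin n)) : EuclideanSpace ℝ (Fin n) :=
  fderiv ℝ u x (EuclideanSpace.single k 1)

/-- Divergence of u at x. -/
def divg {n : ℕ} (u : EuclideanSpace ℝ (Fin n) → EuclideanSpace ℝ (Fin n))
    (x : EuclideanSpace ℝ (Fin n)) : ℝ :=
  ∑ k, pd u k x k

/-- Symmetric gradient ε(u)(x) = (1/2)(∇u + (∇u)ᵀ), entry (i,j) = (∂ⱼuⁱ + ∂ᵢuʲ)/2. -/
def symGrad {n : ℕ} (u : EuclideanSpace ℝ (Fin n) → EuclideanSpace ℝ (Fin n))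
    (x : EuclideanSpace ℝ (Fin n)) : Matrix (Fin n) (Fin n) ℝ :=
  fun i j => (pd u j x i + pd u i x j) / 2

/-- Full gradient ∇u(x), entry (i,j) = ∂ⱼuⁱ. -/
def gradM {n : ℕ} (u : EuclideanSpace ℝ (Fin n) → EuclideanSpace ℝ (Fin n))
    (x : EuclideanSpace ℝ (Fin n)) : Matrix (Fin n) (Fin n) ℝ :=
  fun i j => pd u j x i

/-- Frobenius inner product A : B. -/
def frob {n : ℕ} (A B : Matrix (Fin n) (Fin n) ℝ) : ℝ := ∑ i, ∑ j, A i j * B i j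

/-- Frobenius norm |A|. -/
def fnorm {n : ℕ} (A : Matrix (Fin n) (Fin n) ℝ) : ℝ := Real.sqrt (frob A A)

/-- DH(ε) = (h'(|ε|)/|ε|) ε, interpreted as 0 at ε = 0. -/
def DH {n : ℕ} (h : ℝ → ℝ) (A : Matrix (Fin n) (Fin n) ℝ) : Matrix (Fin n) (Fin n) ℝ :=
  if fnorm A = 0 then 0 else (deriv h (fnorm A) / fnorm A) • A

/-- u is a weak solution of -div DH(ε(u)) + (u·∇)u + ∇π = 0, div u = 0:
for all smooth compactly supported divergence-free φ,
∫ DH(ε(u)) : ε(φ) dx + ∫ uᵏ ∂ₖuⁱ φⁱ dx = 0. -/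
def IsWeakSolution {n : ℕ} (h : ℝ → ℝ)
    (u : EuclideanSpace ℝ (Fin n) → EuclideanSpace ℝ (Fin n)) : Prop :=
  ∀ φ : EuclideanSpace ℝ (Fin n) → EuclideanSpace ℝ (Fin n),
    ContDiff ℝ (⊤ : ℕ∞) φ → HasCompactSupport φ → (∀ x, divg φ x = 0) →
    (∫ x, frob (DH h (symGrad u x)) (symGrad φ x)) +
      (∫ x, ∑ k, ∑ i, u x k * pd u k x i * φ x i) = 0

/-- u is a weak solution of the Stokes-type system -div DH(ε(u)) + ∇π = 0, div u = 0:
for all smooth compactly supported divergence-free φ, ∫ DH(ε(u)) : ε(φ) dx = 0. -/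
def IsStokesWeakSolution {n : ℕ} (h : ℝ → ℝ)
    (u : EuclideanSpace ℝ (Fin n) → EuclideanSpace ℝ (Fin n)) : Prop :=
  ∀ φ : EuclideanSpace ℝ (Fin n) → EuclideanSpace ℝ (Fin n),
    ContDiff ℝ (⊤ : ℕ∞) φ → HasCompactSupport φ → (∀ x, divg φ x = 0) →
    (∫ x, frob (DH h (symGrad u x)) (symGrad φ x)) = 0

/-- The open square Q_R(x₀) ⊂ ℝ². -/
def sqr (R : ℝ) (x₀ : EuclideanSpace ℝ (Fin 2)) : Set (EuclideanSpace ℝ (Fin 2)) :=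
  {x | |x 0 - x₀ 0| < R ∧ |x 1 - x₀ 1| < R}

/-- h'(t)/t, extended by h''(0) at t = 0. -/
def slopeH (h : ℝ → ℝ) (t : ℝ) : ℝ :=
  if t = 0 then deriv (deriv h) 0 else deriv h t / t

/-- estimate (G17): linear growth of a μ-elliptic density:
c₁·2^{-μ}·(t−1) ≤ h(t) ≤ c₂·t for all t ≥ 0. -/
theorem mu_elliptic_linear_growth
    (h : ℝ → ℝ) (c₁ c₂ μ : ℝ)
    (hc₁ : 0 < c₁) (hc₂ : 0 < c₂) (hμ : 1 < μ)
    (hreg : ContDiff ℝ 2 h)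
    (hnonneg : ∀ t, 0 ≤ t → 0 ≤ h t)
    (h0 : h 0 = 0) (h0' : deriv h 0 = 0)
    (hlow : ∀ t, 0 ≤ t → c₁ * (1 + t) ^ (-μ) ≤ deriv (deriv h) t)
    (hup : ∀ t, 0 ≤ t → deriv h t ≤ c₂ * t / (1 + t)) :
    ∀ t, 0 ≤ t →
      c₁ * (2 : ℝ) ^ (-μ) * (t - 1) ≤ h t ∧ h t ≤ c₂ * t := by
  have hd1 : Differentiable ℝ h := hreg.differentiable (by norm_num)
  have hc1' : ContDiff ℝ 1 (deriv h) := by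
    have := (contDiff_succ_iff_deriv (n := 1)).mp (by exact_mod_cast hreg)
    exact this.2.2
  have hd2 : Differentiable ℝ (deriv h) := hc1'.differentiable one_ne_zero
  set a : ℝ := c₁ * (2 : ℝ) ^ (-μ) with ha
  have ha_pos : 0 < a := mul_pos hc₁ (Real.rpow_pos_of_pos two_pos _)
  -- Upper bound
  have hup' : ∀ t, 0 ≤ t → h t ≤ c₂ * t := by
    intro t ht
    have hmono : MonotoneOn (fun s => c₂ * s - h s) (Set.Ici 0) := by
      apply monotoneOn_of_deriv_nonneg (convex_Ici 0)
      · exact ((continuous_const.mul continuous_id).sub hd1.continuous).continuousOn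
      · intro s hs
        exact ((differentiable_const _).mul differentiable_id).differentiableAt.sub
          (hd1 s) |>.differentiableWithinAt
      · intro s hs
        rw [interior_Ici] at hs
        have hs0 : (0:ℝ) ≤ s := le_of_lt hs
        have hs0' : 0 < s := hs
        have hD : HasDerivAt (fun s => c₂ * s - h s) (c₂ - deriv h s) s := by
          simpa [Pi.sub_def] using ((hasDerivAt_id s).const_mul c₂).sub (hd1 s).hasDerivAt
        rw [hD.deriv]
        have h1 : deriv h s ≤ c₂ * s / (1 + s) := hup s hs0
        have h2 : c₂ * s / (1 + s) ≤ c₂ := by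
          rw [div_le_iff₀ (by linarith)]
          nlinarith
        linarith
    have := hmono (Set.self_mem_Ici) (Set.mem_Ici.mpr ht) ht
    simp only [mul_zero, h0, sub_zero] at this
    linarith
  -- deriv h is monotone on [0,∞)
  have hmono' : MonotoneOn (deriv h) (Set.Ici 0) := by
    apply monotoneOn_of_deriv_nonneg (convex_Ici 0) hd2.continuous.continuousOn
      (fun s _ => (hd2 s).differentiableWithinAt)
    intro s hs
    rw [interior_Ici] at hs
    have hs' : 0 < s := hs
    have : (0:ℝ) < c₁ * (1 + s) ^ (-μ) :=
      mul_pos hc₁ (Real.rpow_pos_of_pos (by linarith) _)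
    linarith [hlow s (le_of_lt hs')]
  -- deriv h 1 ≥ a
  have hkey : a ≤ deriv h 1 := by
    have hmono2 : MonotoneOn (fun s => deriv h s - a * s) (Set.Icc 0 1) := by
      apply monotoneOn_of_deriv_nonneg (convex_Icc 0 1)
      · exact (hd2.continuous.sub (continuous_const.mul continuous_id)).continuousOn
      · intro s hs
        exact ((hd2 s).sub (((differentiable_const _).mul
          differentiable_id) s)).differentiableWithinAt
      · intro s hs
        rw [interior_Icc] at hs
        obtain ⟨hsl, hsr⟩ := hs
        have hD : HasDerivAt (fun s => deriv h s - a * s)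
            (deriv (deriv h) s - a) s := by
          simpa [Pi.sub_def] using (hd2 s).hasDerivAt.sub ((hasDerivAt_id s).const_mul a)
        rw [hD.deriv]
        have h1 : c₁ * (1 + s) ^ (-μ) ≤ deriv (deriv h) s := hlow s (le_of_lt hsl)
        have h2 : (2:ℝ) ^ (-μ) ≤ (1 + s) ^ (-μ) := by
          apply Real.rpow_le_rpow_of_nonpos (by linarith) (by linarith) (by linarith)
        have h3 : a ≤ c₁ * (1 + s) ^ (-μ) := by
          rw [ha]
          exact mul_le_mul_of_nonneg_left h2 (le_of_lt hc₁)
        linarith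
    have := hmono2 (Set.mem_Icc.mpr ⟨le_refl 0, zero_le_one⟩)
      (Set.mem_Icc.mpr ⟨zero_le_one, le_refl 1⟩) zero_le_one
    simp only [mul_zero, mul_one, h0', sub_zero] at this
    linarith
  -- Lower bound
  intro t ht
  refine ⟨?_, hup' t ht⟩
  rcases le_or_gt t 1 with h1 | h1
  · have : c₁ * (2:ℝ) ^ (-μ) * (t - 1) ≤ 0 :=
      mul_nonpos_of_nonneg_of_nonpos (le_of_lt ha_pos) (by linarith)
    exact this.trans (hnonneg t ht)
  · have hmono3 : MonotoneOn (fun s => h s - a * (s - 1)) (Set.Ici 1) := by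
      apply monotoneOn_of_deriv_nonneg (convex_Ici 1)
      · exact (hd1.continuous.sub
          (continuous_const.mul (continuous_id.sub continuous_const))).continuousOn
      · intro s hs
        exact ((hd1 s).sub ((((differentiable_const a).mul
          (differentiable_id.sub (differentiable_const 1)))) s)).differentiableWithinAt
      · intro s hs
        rw [interior_Ici] at hs
        have hs' : 1 < s := hs
        have hD : HasDerivAt (fun s => h s - a * (s - 1)) (deriv h s - a) s := by
          have : HasDerivAt (fun s : ℝ => a * (s - 1)) (a * 1) s :=
            ((hasDerivAt_id s).sub_const 1).const_mul a
          simpa [Pi.sub_def] using (hd1 s).hasDerivAt.sub this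
        rw [hD.deriv]
        have := hmono' (Set.mem_Ici.mpr zero_le_one)
          (Set.mem_Ici.mpr (by linarith : (0:ℝ) ≤ s)) (by linarith)
        linarith
    have := hmono3 (Set.self_mem_Ici) (Set.mem_Ici.mpr (le_of_lt h1)) (le_of_lt h1)
    simp only [sub_self, mul_zero, sub_zero] at this
    have hh1 : 0 ≤ h 1 := hnonneg 1 zero_le_one
    rw [ha] at this ⊢
    linarith
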